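/- Let F : ℝ₊ → ℝ satisfy F(x) = k(x+1)^{−p}[1 + (1+x)^{−ς} h(x)] for all x > 0, with k > 0, p > 0, ς ≥ 1, and h bounded and Lipschitz. Then there exist η > 0 and M < ∞ such that for all x, y ≥ 0 and all ε ∈ [0, η]: |F(x) − k x^{−p}| ≤ M x^{−(1+ε)p} and |F(x) − F(y)| ≤ M |x^{−p} − y^{−p}|. -/

import Mathlib

open MeasureTheory ProbabilityTheory Filter Set Real

noncomputable section

/-- A real-valued Lévy process `ξ` under the probability measure `μ`:
càdlàg paths, `ξ 0 = 0`, stationary and independent increments. -/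
structure IsLevyProcess {Ω : Type*} [MeasurableSpace Ω] (μ : Measure Ω)
    (ξ : ℝ → Ω → ℝ) : Prop where
  isProb : IsProbabilityMeasure μ
  meas : ∀ t, Measurable (ξ t)
  init : ∀ ω, ξ 0 ω = 0
  cadlag_right : ∀ ω t, ContinuousWithinAt (fun s => ξ s ω) (Ici t) t
  cadlag_left : ∀ ω t, 0 < t →
    ∃ l : ℝ, Tendsto (fun s => ξ s ω) (nhdsWithin t (Iio t)) (nhds l)
  stationary : ∀ s t : ℝ, 0 ≤ s → s ≤ t →
    Measure.map (fun ω => ξ t ω - ξ s ω) μ = Measure.map (ξ (t - s)) μ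
  indep : ∀ s t : ℝ, 0 ≤ s → s ≤ t →
    Indep (MeasurableSpace.comap (fun ω => ξ t ω - ξ s ω) (borel ℝ))
      (⨆ u ∈ Icc (0:ℝ) s, MeasurableSpace.comap (ξ u) (borel ℝ)) μ

/-- Laplace exponent `ψ(λ) = log E[exp (λ ξ₁)]`. -/
def laplaceExponent {Ω : Type*} [MeasurableSpace Ω] (μ : Measure Ω)
    (ξ : ℝ → Ω → ℝ) (l : ℝ) : ℝ :=
  Real.log (∫ ω, Real.exp (l * ξ 1 ω) ∂μ)

/-- Exponential functional `I_t(ξ) = ∫₀ᵗ e^{-ξ_s} ds`. -/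
def expFunctional {Ω : Type*} (ξ : ℝ → Ω → ℝ) (t : ℝ) (ω : Ω) : ℝ :=
  ∫ s in (0:ℝ)..t, Real.exp (-(ξ s ω))

/-- Exponential functional `I_∞(ξ) = ∫₀^∞ e^{-ξ_s} ds`. -/
def expFunctionalInf {Ω : Type*} (ξ : ℝ → Ω → ℝ) (ω : Ω) : ℝ :=
  ∫ s in Ioi (0:ℝ), Real.exp (-(ξ s ω))

/-- `μ'` is the Esscher transform of `μ` (w.r.t. the Lévy process `ξ`) with
parameter `l`: on the natural σ-algebra up to time `t` it has density
`exp (l ξ_t - t ψ(l))` with respect to `μ`. -/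
def IsEsscher {Ω : Type*} [MeasurableSpace Ω] (μ : Measure Ω) (ξ : ℝ → Ω → ℝ)
    (l : ℝ) (μ' : Measure Ω) : Prop :=
  IsProbabilityMeasure μ' ∧ ∀ t : ℝ, 0 ≤ t → ∀ A : Set Ω,
    MeasurableSet[⨆ u ∈ Icc (0:ℝ) t, MeasurableSpace.comap (ξ u) (borel ℝ)] A →
    μ' A = ENNReal.ofReal
      (∫ ω in A, Real.exp (l * ξ t ω - t * laplaceExponent μ ξ l) ∂μ)


private lemma hasDerivAt_g (p c : ℝ) {t : ℝ} (ht : t ≠ 0) :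
    HasDerivAt (fun t : ℝ => t ^ (-p) + c * t) (-p * t ^ (-p-1) + c) t := by
  have h1 : HasDerivAt (fun t : ℝ => t ^ (-p)) (-p * t ^ (-p-1)) t := by
    simpa using Real.hasDerivAt_rpow_const (p := -p) (Or.inl ht)
  exact (h1.add ((hasDerivAt_id t).const_mul c)).congr_deriv (by ring)

private lemma hasDerivAt_f1 (q p : ℝ) {t : ℝ} (ht : 0 < t) :
    HasDerivAt (fun t : ℝ => (q/p) * t ^ (-p) - (1+t) ^ (-q))
      ((q/p) * (-p * t ^ (-p-1)) - (-q * (1+t) ^ (-q-1) * 1)) t := by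
  have h1 : HasDerivAt (fun t : ℝ => t ^ (-p)) (-p * t ^ (-p-1)) t := by
    simpa using Real.hasDerivAt_rpow_const (p := -p) (Or.inl ht.ne')
  have h2 : HasDerivAt (fun t : ℝ => (1+t) ^ (-q)) (-q * (1+t) ^ (-q-1) * 1) t := by
    have h3 : HasDerivAt (fun t : ℝ => 1+t) 1 t := (hasDerivAt_id t).const_add 1
    have h4 := h3.rpow_const (p := -q) (Or.inl (by positivity))
    convert h4 using 1
    ring
  exact (h1.const_mul _).sub h2

/-- `(1+x)^(-q) - (1+y)^(-q) ≤ (q/p) * (x^(-p) - y^(-p))` for `0 < x ≤ y`, `0 < p ≤ q`. -/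
private lemma shift_diff_le {p q : ℝ} (hp : 0 < p) (hpq : p ≤ q)
    {x y : ℝ} (hx : 0 < x) (hxy : x ≤ y) :
    (1+x) ^ (-q) - (1+y) ^ (-q) ≤ (q/p) * (x ^ (-p) - y ^ (-p)) := by
  have hq : 0 < q := hp.trans_le hpq
  have key : AntitoneOn (fun t : ℝ => (q/p) * t ^ (-p) - (1+t) ^ (-q)) (Ioi 0) := by
    apply antitoneOn_of_deriv_nonpos (convex_Ioi 0)
    · intro t ht
      exact (hasDerivAt_f1 q p ht).continuousAt.continuousWithinAt
    · rw [interior_Ioi]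
      intro t ht
      exact (hasDerivAt_f1 q p ht).differentiableAt.differentiableWithinAt
    · rw [interior_Ioi]
      intro t ht
      rw [(hasDerivAt_f1 q p ht).deriv]
      have h1 : (1+t) ^ (-q-1) ≤ (1+t) ^ (-p-1) :=
        rpow_le_rpow_of_exponent_le (by linarith [mem_Ioi.mp ht]) (by linarith)
      have h2 : (1+t) ^ (-p-1) ≤ t ^ (-p-1) :=
        rpow_le_rpow_of_nonpos (mem_Ioi.mp ht) (by linarith [mem_Ioi.mp ht]) (by linarith)
      have e1 : (q/p) * (-p * t ^ (-p-1)) = -(q * t ^ (-p-1)) := by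
        field_simp
      rw [e1]
      nlinarith [mul_le_mul_of_nonneg_left (h1.trans h2) hq.le]
  have := key (mem_Ioi.mpr hx) (mem_Ioi.mpr (hx.trans_le hxy)) hxy
  simp only [mul_sub] at *
  linarith

/-- convexity lower bound: `p * y^(-p-1) * (y-x) ≤ x^(-p) - y^(-p)` for `0 < x ≤ y`. -/
private lemma convex_lower {p : ℝ} (hp : 0 < p) {x y : ℝ} (hx : 0 < x) (hxy : x ≤ y) :
    p * y ^ (-p-1) * (y - x) ≤ x ^ (-p) - y ^ (-p) := by
  have hy : 0 < y := hx.trans_le hxy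
  set c : ℝ := p * y ^ (-p-1) with hc
  have key : AntitoneOn (fun t : ℝ => t ^ (-p) + c * t) (Ioc 0 y) := by
    apply antitoneOn_of_deriv_nonpos (convex_Ioc 0 y)
    · intro t ht
      exact (hasDerivAt_g p c ht.1.ne').continuousAt.continuousWithinAt
    · rw [interior_Ioc]
      intro t ht
      exact (hasDerivAt_g p c ht.1.ne').differentiableAt.differentiableWithinAt
    · rw [interior_Ioc]
      intro t ht
      rw [(hasDerivAt_g p c ht.1.ne').deriv]
      have h2 : y ^ (-p-1) ≤ t ^ (-p-1) :=
        rpow_le_rpow_of_nonpos ht.1 ht.2.le (by linarith)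
      have := mul_le_mul_of_nonneg_left h2 hp.le
      simp only [hc]
      nlinarith
  have := key (mem_Ioc.mpr ⟨hx, hxy⟩) (mem_Ioc.mpr ⟨hy, le_refl y⟩) hxy
  dsimp only at this
  nlinarith

/-- `x^(-p) - (x+1)^(-p) ≤ p * x^(-p-1)` for `0 < x`. -/
private lemma pow_diff_succ {p : ℝ} (hp : 0 < p) {x : ℝ} (hx : 0 < x) :
    x ^ (-p) - (x+1) ^ (-p) ≤ p * x ^ (-p-1) := by
  set c : ℝ := p * x ^ (-p-1) with hc
  have key : MonotoneOn (fun t : ℝ => t ^ (-p) + c * t) (Ici x) := by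
    apply monotoneOn_of_deriv_nonneg (convex_Ici x)
    · intro t ht
      exact (hasDerivAt_g p c (hx.trans_le (mem_Ici.mp ht)).ne').continuousAt.continuousWithinAt
    · rw [interior_Ici]
      intro t ht
      have htx := mem_Ioi.mp ht
      exact (hasDerivAt_g p c (hx.trans htx).ne').differentiableAt.differentiableWithinAt
    · rw [interior_Ici]
      intro t ht
      have htx := mem_Ioi.mp ht
      have ht0 : (0:ℝ) < t := hx.trans htx
      rw [(hasDerivAt_g p c ht0.ne').deriv]
      have h2 : t ^ (-p-1) ≤ x ^ (-p-1) :=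
        rpow_le_rpow_of_nonpos hx htx.le (by linarith)
      have := mul_le_mul_of_nonneg_left h2 hp.le
      simp only [hc]
      nlinarith
  have := key (mem_Ici.mpr (le_refl x)) (mem_Ici.mpr (by linarith : x ≤ x+1)) (by linarith)
  dsimp only at this
  nlinarith


/-- technical estimates for functions of the form (A1):
`|F(x) - k x^{-p}| ≤ M x^{-(1+ε)p}` and `|F(x) - F(y)| ≤ M |x^{-p} - y^{-p}|`. -/
theorem A1_function_estimates
    (F h : ℝ → ℝ) (k p ς : ℝ) (hk : 0 < k) (hp : 0 < p) (hς : 1 ≤ ς)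
    (hbound : ∃ C : ℝ, ∀ x : ℝ, |h x| ≤ C)
    (hLip : ∃ L : NNReal, LipschitzWith L h)
    (hF : ∀ x : ℝ, 0 < x →
      F x = k * (x + 1) ^ (-p) * (1 + (1 + x) ^ (-ς) * h x)) :
    ∃ η : ℝ, 0 < η ∧ ∃ M : ℝ, 0 ≤ M ∧
      ∀ x : ℝ, 0 < x → ∀ y : ℝ, 0 < y → ∀ ε ∈ Icc (0:ℝ) η,
        |F x - k * x ^ (-p)| ≤ M * x ^ (-((1 + ε) * p)) ∧
        |F x - F y| ≤ M * |x ^ (-p) - y ^ (-p)| := by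
  obtain ⟨C, hC⟩ := hbound
  obtain ⟨L, hL⟩ := hLip
  have hC0 : 0 ≤ C := (abs_nonneg _).trans (hC 0)
  have hL0 : (0:ℝ) ≤ (L:ℝ) := L.coe_nonneg
  set q : ℝ := p + ς with hqdef
  clear_value q
  have hpq : p ≤ q := by rw [hqdef]; linarith
  have hq1 : p + 1 ≤ q := by rw [hqdef]; linarith
  -- the normal form of F
  have Fform : ∀ a : ℝ, 0 < a → F a = k * (1+a) ^ (-p) + k * (1+a) ^ (-q) * h a := by
    intro a ha
    have ha1 : (0:ℝ) < 1 + a := by linarith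
    have e2 : (1+a) ^ (-p) * (1+a) ^ (-ς) = (1+a) ^ (-q) := by
      rw [← Real.rpow_add ha1]
      congr 1
      rw [hqdef]; ring
    rw [hF a ha, add_comm a 1, ← e2]
    ring
  refine ⟨1/p, by positivity, k * (1 + p + C) + k * (1 + C * (q/p) + (L:ℝ)/p), ?_, ?_⟩
  · have h1 : (0:ℝ) ≤ 1 + p + C := by linarith
    have h2 : (0:ℝ) ≤ C * (q/p) := mul_nonneg hC0 (div_nonneg (by linarith) hp.le)
    have h3 : (0:ℝ) ≤ (L:ℝ)/p := div_nonneg hL0 hp.le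
    have h4 : (0:ℝ) ≤ 1 + C * (q/p) + (L:ℝ)/p := by linarith
    exact add_nonneg (mul_nonneg hk.le h1) (mul_nonneg hk.le h4)
  set M : ℝ := k * (1 + p + C) + k * (1 + C * (q/p) + (L:ℝ)/p) with hMdef
  clear_value M
  have hMA : (0:ℝ) ≤ 1 + p + C := by linarith
  have hMB : (0:ℝ) ≤ 1 + C * (q/p) + (L:ℝ)/p := by
    have h2 : (0:ℝ) ≤ C * (q/p) := mul_nonneg hC0 (div_nonneg (by linarith) hp.le)
    have h3 : (0:ℝ) ≤ (L:ℝ)/p := div_nonneg hL0 hp.le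
    linarith
  have hM1 : k * (1 + p + C) ≤ M := by
    have := mul_nonneg hk.le hMB
    linarith
  have hM2 : k * (1 + C * (q/p) + (L:ℝ)/p) ≤ M := by
    have := mul_nonneg hk.le hMA
    linarith
  intro x hx y hy ε ⟨hε0, hεη⟩
  have hx1 : (0:ℝ) < 1 + x := by linarith
  constructor
  · -- first estimate
    have key : F x - k * x ^ (-p) =
        k * ((1+x) ^ (-p) - x ^ (-p)) + k * (1+x) ^ (-q) * h x := by
      rw [Fform x hx]; ring
    set X : ℝ := x ^ (-((1 + ε) * p)) with hX
    clear_value X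
    have hXpos : 0 < X := by rw [hX]; exact Real.rpow_pos_of_pos hx _
    have habs : |F x - k * x ^ (-p)| ≤
        k * (x ^ (-p) - (1+x) ^ (-p)) + k * (1+x) ^ (-q) * C := by
      rw [key]
      have hdn : (1+x) ^ (-p) ≤ x ^ (-p) :=
        rpow_le_rpow_of_nonpos hx (by linarith) (by linarith)
      have h1 : |k * ((1+x) ^ (-p) - x ^ (-p))| = k * (x ^ (-p) - (1+x) ^ (-p)) := by
        rw [abs_mul, abs_of_pos hk, abs_of_nonpos (by linarith)]
        ring
      have h2 : |k * (1+x) ^ (-q) * h x| ≤ k * (1+x) ^ (-q) * C := by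
        rw [abs_mul]
        have hbase : 0 ≤ k * (1+x) ^ (-q) := by positivity
        rw [abs_of_nonneg hbase]
        exact mul_le_mul_of_nonneg_left (hC x) hbase
      calc |k * ((1+x) ^ (-p) - x ^ (-p)) + k * (1+x) ^ (-q) * h x|
          ≤ |k * ((1+x) ^ (-p) - x ^ (-p))| + |k * (1+x) ^ (-q) * h x| := abs_add_le _ _
        _ ≤ k * (x ^ (-p) - (1+x) ^ (-p)) + k * (1+x) ^ (-q) * C := by
            rw [h1]; linarith
    rcases le_total x 1 with hxle | hxge
    · -- small x
      have hxp1 : (1:ℝ) ≤ X := by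
        rw [hX]
        exact one_le_rpow_of_pos_of_le_one_of_nonpos hx hxle (by nlinarith)
      have hA : x ^ (-p) ≤ X := by
        rw [hX]
        exact rpow_le_rpow_of_exponent_ge hx hxle (by nlinarith)
      have hA' : x ^ (-p) - (1+x) ^ (-p) ≤ X := by
        have : (0:ℝ) ≤ (1+x) ^ (-p) := (Real.rpow_pos_of_pos hx1 _).le
        linarith
      have hB' : (1+x) ^ (-q) ≤ X := by
        have h5 : (1+x) ^ (-q) ≤ 1 :=
          rpow_le_one_of_one_le_of_nonpos (by linarith) (by linarith)
        exact h5.trans hxp1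
      have hfin : |F x - k * x ^ (-p)| ≤ k * (1 + C) * X := by
        have t1 : k * (x ^ (-p) - (1+x) ^ (-p)) ≤ k * X :=
          mul_le_mul_of_nonneg_left hA' hk.le
        have t2 : k * (1+x) ^ (-q) * C ≤ k * X * C :=
          mul_le_mul_of_nonneg_right (mul_le_mul_of_nonneg_left hB' hk.le) hC0
        have e : k * (1 + C) * X = k * X + k * X * C := by ring
        linarith
      refine hfin.trans ?_
      have h8 : k * (1 + C) ≤ M :=
        (mul_le_mul_of_nonneg_left (by linarith : (1:ℝ) + C ≤ 1 + p + C) hk.le).trans hM1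
      exact mul_le_mul_of_nonneg_right h8 hXpos.le
    · -- large x
      have hxm1 : (1:ℝ) ≤ x := hxge
      have hstep : x ^ (-p-1) ≤ X := by
        rw [hX]
        apply rpow_le_rpow_of_exponent_le hxm1
        have : ε * p ≤ 1 := by
          have := mul_le_mul_of_nonneg_right hεη hp.le
          rwa [one_div, inv_mul_cancel₀ hp.ne'] at this
        nlinarith
      have hA' : x ^ (-p) - (1+x) ^ (-p) ≤ p * x ^ (-p-1) := by
        have := pow_diff_succ hp hx
        rwa [add_comm x 1] at this
      have hB' : (1+x) ^ (-q) ≤ x ^ (-p-1) := by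
        have h5 : (1+x) ^ (-q) ≤ (1+x) ^ (-(p+1)) :=
          rpow_le_rpow_of_exponent_le (by linarith) (by linarith)
        have h6 : (1+x) ^ (-(p+1)) ≤ x ^ (-(p+1)) :=
          rpow_le_rpow_of_nonpos hx (by linarith) (by linarith)
        have e : -(p+1) = -p-1 := by ring
        rw [e] at h5 h6
        exact h5.trans h6
      have hxpw : (0:ℝ) ≤ x ^ (-p-1) := (Real.rpow_pos_of_pos hx _).le
      have hbig : |F x - k * x ^ (-p)| ≤ k * (p + C) * x ^ (-p-1) := by
        have t1 : k * (x ^ (-p) - (1+x) ^ (-p)) ≤ k * (p * x ^ (-p-1)) :=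
          mul_le_mul_of_nonneg_left hA' hk.le
        have t2 : k * (1+x) ^ (-q) * C ≤ k * x ^ (-p-1) * C :=
          mul_le_mul_of_nonneg_right (mul_le_mul_of_nonneg_left hB' hk.le) hC0
        have e : k * (p + C) * x ^ (-p-1) = k * (p * x ^ (-p-1)) + k * x ^ (-p-1) * C := by
          ring
        linarith
      refine hbig.trans ?_
      have h7 : k * (p + C) * x ^ (-p-1) ≤ k * (p + C) * X :=
        mul_le_mul_of_nonneg_left hstep (mul_nonneg hk.le (by linarith))
      refine h7.trans ?_
      have h8 : k * (p + C) ≤ M :=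
        (mul_le_mul_of_nonneg_left (by linarith : p + C ≤ 1 + p + C) hk.le).trans hM1
      exact mul_le_mul_of_nonneg_right h8 hXpos.le
  · -- second estimate
    have main : ∀ a b : ℝ, 0 < a → 0 < b → a ≤ b →
        |F a - F b| ≤ M * |a ^ (-p) - b ^ (-p)| := by
      intro a b ha hb hab
      have ha1 : (0:ℝ) < 1 + a := by linarith
      have hb1 : (0:ℝ) < 1 + b := by linarith
      set D : ℝ := a ^ (-p) - b ^ (-p) with hD
      clear_value D
      have hD0 : 0 ≤ D := by
        have : b ^ (-p) ≤ a ^ (-p) := rpow_le_rpow_of_nonpos ha hab (by linarith)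
        simp [hD]; linarith
      rw [abs_of_nonneg hD0]
      have decomp : F a - F b =
          k * ((1+a) ^ (-p) - (1+b) ^ (-p))
          + k * (((1+a) ^ (-q) - (1+b) ^ (-q)) * h a)
          + k * ((1+b) ^ (-q) * (h a - h b)) := by
        rw [Fform a ha, Fform b hb]; ring
      -- term 1
      have hT1 : (1+a) ^ (-p) - (1+b) ^ (-p) ≤ D := by
        have := shift_diff_le hp (le_refl p) ha hab
        rw [div_self hp.ne'] at this
        simpa [hD] using this
      have hT1' : 0 ≤ (1+a) ^ (-p) - (1+b) ^ (-p) := by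
        have : (1+b) ^ (-p) ≤ (1+a) ^ (-p) :=
          rpow_le_rpow_of_nonpos ha1 (by linarith) (by linarith)
        linarith
      -- term 2
      have hS : (1+a) ^ (-q) - (1+b) ^ (-q) ≤ (q/p) * D := by
        have := shift_diff_le hp hpq ha hab
        simpa [hD] using this
      have hS' : 0 ≤ (1+a) ^ (-q) - (1+b) ^ (-q) := by
        have : (1+b) ^ (-q) ≤ (1+a) ^ (-q) :=
          rpow_le_rpow_of_nonpos ha1 (by linarith) (by linarith)
        linarith
      have hT2 : |((1+a) ^ (-q) - (1+b) ^ (-q)) * h a| ≤ C * ((q/p) * D) := by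
        rw [abs_mul, abs_of_nonneg hS']
        calc ((1+a) ^ (-q) - (1+b) ^ (-q)) * |h a|
            ≤ ((1+a) ^ (-q) - (1+b) ^ (-q)) * C :=
              mul_le_mul_of_nonneg_left (hC a) hS'
          _ ≤ ((q/p) * D) * C := mul_le_mul_of_nonneg_right hS hC0
          _ = C * ((q/p) * D) := by ring
      -- term 3
      have hq0 : (0:ℝ) < 1 + b := hb1
      have hBq : (1+b) ^ (-q) ≤ b ^ (-p-1) := by
        have h5 : (1+b) ^ (-q) ≤ (1+b) ^ (-(p+1)) :=
          rpow_le_rpow_of_exponent_le (by linarith) (by linarith)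
        have h6 : (1+b) ^ (-(p+1)) ≤ b ^ (-(p+1)) :=
          rpow_le_rpow_of_nonpos hb (by linarith) (by linarith)
        have e : -(p+1) = -p-1 := by ring
        rw [e] at h5 h6
        exact h5.trans h6
      have hLipab : |h a - h b| ≤ (L:ℝ) * (b - a) := by
        have := hL.dist_le_mul a b
        rw [Real.dist_eq, Real.dist_eq] at this
        rwa [abs_of_nonpos (by linarith : a - b ≤ 0), neg_sub] at this
      have hconv : p * b ^ (-p-1) * (b - a) ≤ D := by
        rw [hD]; exact convex_lower hp ha hab
      have hT3 : |(1+b) ^ (-q) * (h a - h b)| ≤ ((L:ℝ)/p) * D := by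
        rw [abs_mul]
        have hbq0 : (0:ℝ) ≤ (1+b) ^ (-q) := (Real.rpow_pos_of_pos hb1 _).le
        rw [abs_of_nonneg hbq0]
        have s1 : (1+b) ^ (-q) * |h a - h b| ≤ b ^ (-p-1) * ((L:ℝ) * (b - a)) := by
          have hpw : (0:ℝ) ≤ b ^ (-p-1) := (Real.rpow_pos_of_pos hb _).le
          have habs0 : (0:ℝ) ≤ |h a - h b| := abs_nonneg _
          calc (1+b) ^ (-q) * |h a - h b| ≤ b ^ (-p-1) * |h a - h b| :=
                mul_le_mul_of_nonneg_right hBq habs0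
            _ ≤ b ^ (-p-1) * ((L:ℝ) * (b - a)) :=
                mul_le_mul_of_nonneg_left hLipab hpw
        refine s1.trans ?_
        have hpw : (0:ℝ) ≤ b ^ (-p-1) := (Real.rpow_pos_of_pos hb _).le
        have : (L:ℝ) * (p * b ^ (-p-1) * (b - a)) ≤ (L:ℝ) * D :=
          mul_le_mul_of_nonneg_left hconv hL0
        have e2 : b ^ (-p-1) * ((L:ℝ) * (b - a))
            = (1/p) * ((L:ℝ) * (p * b ^ (-p-1) * (b - a))) := by
          field_simp
        have e3 : ((L:ℝ)/p) * D = (1/p) * ((L:ℝ) * D) := by ring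
        rw [e2, e3]
        exact mul_le_mul_of_nonneg_left this (by positivity)
      -- combine
      rw [decomp]
      have tri : |k * ((1+a) ^ (-p) - (1+b) ^ (-p))
          + k * (((1+a) ^ (-q) - (1+b) ^ (-q)) * h a)
          + k * ((1+b) ^ (-q) * (h a - h b))|
          ≤ k * ((1+a) ^ (-p) - (1+b) ^ (-p))
          + k * |((1+a) ^ (-q) - (1+b) ^ (-q)) * h a|
          + k * |(1+b) ^ (-q) * (h a - h b)| := by
        calc |k * ((1+a) ^ (-p) - (1+b) ^ (-p))
            + k * (((1+a) ^ (-q) - (1+b) ^ (-q)) * h a)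
            + k * ((1+b) ^ (-q) * (h a - h b))|
            ≤ |k * ((1+a) ^ (-p) - (1+b) ^ (-p))
              + k * (((1+a) ^ (-q) - (1+b) ^ (-q)) * h a)|
              + |k * ((1+b) ^ (-q) * (h a - h b))| := abs_add_le _ _
          _ ≤ |k * ((1+a) ^ (-p) - (1+b) ^ (-p))|
              + |k * (((1+a) ^ (-q) - (1+b) ^ (-q)) * h a)|
              + |k * ((1+b) ^ (-q) * (h a - h b))| := by
                linarith [abs_add_le (k * ((1+a) ^ (-p) - (1+b) ^ (-p)))
                  (k * (((1+a) ^ (-q) - (1+b) ^ (-q)) * h a))]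
          _ = k * ((1+a) ^ (-p) - (1+b) ^ (-p))
              + k * |((1+a) ^ (-q) - (1+b) ^ (-q)) * h a|
              + k * |(1+b) ^ (-q) * (h a - h b)| := by
                rw [abs_mul k ((1+a) ^ (-p) - (1+b) ^ (-p)),
                  abs_mul k (((1+a) ^ (-q) - (1+b) ^ (-q)) * h a),
                  abs_mul k ((1+b) ^ (-q) * (h a - h b)),
                  abs_of_pos hk, abs_of_nonneg hT1']
      refine tri.trans ?_
      have c2 : k * |((1+a) ^ (-q) - (1+b) ^ (-q)) * h a| ≤ k * (C * ((q/p) * D)) :=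
        mul_le_mul_of_nonneg_left hT2 hk.le
      have c3 : k * |(1+b) ^ (-q) * (h a - h b)| ≤ k * (((L:ℝ)/p) * D) :=
        mul_le_mul_of_nonneg_left hT3 hk.le
      have c1 : k * ((1+a) ^ (-p) - (1+b) ^ (-p)) ≤ k * D :=
        mul_le_mul_of_nonneg_left hT1 hk.le
      have e : k * D + k * (C * ((q/p) * D)) + k * (((L:ℝ)/p) * D)
          = k * (1 + C * (q/p) + (L:ℝ)/p) * D := by ring
      have last : k * (1 + C * (q/p) + (L:ℝ)/p) * D ≤ M * D :=
        mul_le_mul_of_nonneg_right hM2 hD0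
      linarith
    rcases le_total x y with hxy | hxy
    · exact main x y hx hy hxy
    · have := main y x hy hx hxy
      rwa [abs_sub_comm, abs_sub_comm (y ^ (-p))] at this
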